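/- Let ε > 0 and let γ : ℝ → ℂ be a measurable function satisfying Re γ(λ) ≤ -ε|λ| for all λ ∈ ℝ. Then there is a constant c(ε) > 0, depending only on ε, such that for every f ∈ L²(ℝ) the integral ∫_ℝ e^{γ(λ)x} f(λ) dλ converges absolutely for every x > 0 and (∫_0^∞ |∫_ℝ e^{γ(λ)x} f(λ) dλ|² dx)^{1/2} ≤ c(ε) ‖f‖_{L²(ℝ)}. -/

import Mathlib

open MeasureTheory Set Real ENNReal

namespace ExpDecayAux

lemma gam_half {b : ℝ} (hb : 0 < b) :
    ∫ t in Ioi (0:ℝ), t ^ (-(1/2) : ℝ) * Real.exp (-(b*t)) = Real.sqrt π * b ^ (-(1/2):ℝ) := by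
  have := Real.integral_rpow_mul_exp_neg_mul_Ioi (a := 1/2) (r := b) (by norm_num) hb
  rw [show (1:ℝ)/2 - 1 = -(1/2) by norm_num] at this
  rw [this, Real.Gamma_one_half_eq, one_div, Real.inv_rpow hb.le, ← Real.rpow_neg hb.le]
  ring

lemma intOn_half {b : ℝ} (hb : 0 < b) :
    IntegrableOn (fun t : ℝ => t ^ (-(1/2) : ℝ) * Real.exp (-(b*t))) (Ioi 0) := by
  have := integrableOn_rpow_mul_exp_neg_mul_rpow (p := 1) (s := -(1/2)) (b := b)
    (by norm_num) (by norm_num) hb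
  refine this.congr_fun (fun x hx => ?_) measurableSet_Ioi
  simp only [Real.rpow_one, neg_mul]

lemma lintegral_comp_abs' (h : ℝ → ℝ≥0∞) :
    ∫⁻ x : ℝ, h (|x|) = 2 * ∫⁻ x in Ioi (0:ℝ), h x := by
  have hIci : ∫⁻ x in Iic (0:ℝ), h (|x|) = ∫⁻ x in Ici (0:ℝ), h (|x|) := by
    have hemb : MeasurableEmbedding (fun x : ℝ => -x) :=
      (Homeomorph.neg ℝ).measurableEmbedding
    have : (volume : Measure ℝ).restrict (Ici 0)
        = Measure.map (fun x : ℝ => -x) ((volume : Measure ℝ).restrict (Iic 0)) := by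
      rw [← Measure.map_neg_eq_self (volume : Measure ℝ), Measure.restrict_map hemb.measurable
        measurableSet_Ici]
      congr 1
      simp
    rw [this, hemb.lintegral_map]
    simp
  have e1 : ∫⁻ x in Ioi (0:ℝ), h (|x|) = ∫⁻ x in Ioi (0:ℝ), h x :=
    setLIntegral_congr_fun measurableSet_Ioi
      (fun x hx => by rw [abs_of_pos hx])
  have e2 : ∫⁻ x in Ici (0:ℝ), h (|x|) = ∫⁻ x in Ioi (0:ℝ), h (|x|) := by
    rw [Measure.restrict_congr_set Ioi_ae_eq_Ici.symm]
  rw [← lintegral_add_compl (μ := volume) (fun x : ℝ => h |x|)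
    (measurableSet_Iic (a := (0:ℝ))), compl_Iic, hIci, e2, e1, two_mul]

lemma lintB {d : ℝ} (hd : 0 < d) :
    ∫⁻ x in Ioi (0:ℝ), ENNReal.ofReal (x ^ (-(1/2):ℝ) * Real.exp (-(d*x)))
      = ENNReal.ofReal (Real.sqrt π * d ^ (-(1/2):ℝ)) := by
  rw [← ofReal_integral_eq_lintegral_ofReal (intOn_half hd)
    ((ae_restrict_iff' measurableSet_Ioi).mpr
      (Filter.Eventually.of_forall fun t ht => by
        have : (0:ℝ) < t := ht
        positivity)), gam_half hd]

lemma lintA {b : ℝ} (hb : 0 < b) :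
    (∫⁻ l : ℝ, ENNReal.ofReal (|l| ^ (-(1/2):ℝ) * Real.exp (-(b*|l|))))
      = 2 * ENNReal.ofReal (Real.sqrt π * b ^ (-(1/2):ℝ)) := by
  rw [lintegral_comp_abs' (fun t => ENNReal.ofReal (t ^ (-(1/2):ℝ) * Real.exp (-(b*t)))),
    lintB hb]

lemma te_bound {a t : ℝ} (ha : 0 < a) (ht : 0 ≤ t) :
    Real.exp (-(a*t)) * t ^ ((1:ℝ)/2) ≤ 1 + a⁻¹ := by
  have h1 : t ^ ((1:ℝ)/2) ≤ 1 + t := by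
    rcases le_total t 1 with h | h
    · calc t ^ ((1:ℝ)/2) ≤ 1 := Real.rpow_le_one ht h (by norm_num)
        _ ≤ 1 + t := by linarith
    · calc t ^ ((1:ℝ)/2) ≤ t ^ (1:ℝ) :=
            Real.rpow_le_rpow_of_exponent_le h (by norm_num)
        _ = t := Real.rpow_one t
        _ ≤ 1 + t := by linarith
  have hexp : Real.exp (-(a*t)) ≤ 1 := by
    calc Real.exp (-(a*t)) ≤ Real.exp 0 :=
          Real.exp_le_exp.mpr (neg_nonpos.mpr (mul_nonneg ha.le ht))
      _ = 1 := Real.exp_zero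
  have h2 : t * Real.exp (-(a*t)) ≤ a⁻¹ := by
    have h3 : a * t ≤ Real.exp (a*t) := by linarith [Real.add_one_le_exp (a*t)]
    have hE := Real.exp_pos (a*t)
    rw [Real.exp_neg]
    calc t * (Real.exp (a*t))⁻¹ = a⁻¹ * ((a*t) / Real.exp (a*t)) := by
          field_simp
      _ ≤ a⁻¹ * 1 := by
          gcongr
          exact div_le_one_of_le₀ h3 hE.le
      _ = a⁻¹ := mul_one _
  calc Real.exp (-(a*t)) * t ^ ((1:ℝ)/2) ≤ Real.exp (-(a*t)) * (1 + t) := by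
        gcongr
    _ = Real.exp (-(a*t)) + t * Real.exp (-(a*t)) := by ring
    _ ≤ 1 + a⁻¹ := add_le_add hexp h2

lemma cs2 {μ : Measure ℝ} {A B : ℝ → ℝ≥0∞} (hA : AEMeasurable A μ) (hB : AEMeasurable B μ) :
    ∫⁻ l, A l * B l ∂μ
      ≤ (∫⁻ l, A l ^ (2:ℝ) ∂μ) ^ ((1:ℝ)/2) * (∫⁻ l, B l ^ (2:ℝ) ∂μ) ^ ((1:ℝ)/2) :=
  ENNReal.lintegral_mul_le_Lp_mul_Lq μ ⟨by norm_num, by norm_num, by norm_num⟩ hA hB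

lemma sq_half (x : ℝ≥0∞) : (x ^ ((1:ℝ)/2)) ^ (2:ℝ) = x := by
  rw [← ENNReal.rpow_mul]
  norm_num

end ExpDecayAux
open ExpDecayAux in
/-- Bona-type L² estimate: if `Re γ(λ) ≤ -ε|λ|` then
`x ↦ ∫ e^{γ(λ)x} f(λ) dλ` is in `L²(0,∞)` with norm controlled by
`c(ε)‖f‖_{L²(ℝ)}`. -/
theorem exp_decay_L2_estimate (ε : ℝ) (hε : 0 < ε) :
    ∃ c > 0, ∀ γ : ℝ → ℂ, Measurable γ → (∀ l : ℝ, (γ l).re ≤ -ε * |l|) →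
      ∀ f : ℝ → ℂ, MemLp f 2 (volume : Measure ℝ) →
        (∀ x : ℝ, 0 < x → Integrable (fun l : ℝ => Complex.exp (γ l * x) * f l)) ∧
        Real.sqrt (∫ x in Set.Ioi (0:ℝ),
            ‖∫ l : ℝ, Complex.exp (γ l * x) * f l‖ ^ 2)
          ≤ c * (eLpNorm f 2 (volume : Measure ℝ)).toReal := by
  refine ⟨Real.sqrt (2 * π / ε), Real.sqrt_pos.mpr (by positivity), ?_⟩
  intro γ hγ hγre f hf
  obtain ⟨f', hf'sm, hff'⟩ := hf.1
  have hf'meas : Measurable f' := hf'sm.measurable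
  set S : ℝ≥0∞ := eLpNorm f 2 volume with hSdef
  have hSne : S ≠ ⊤ := hf.2.ne
  have hSf' : eLpNorm f' 2 volume = S := (eLpNorm_congr_ae hff').symm
  set g : ℝ → ℝ≥0∞ := fun l => (‖f' l‖₊ : ℝ≥0∞) with hgdef
  have hgmeas : Measurable g := hf'meas.nnnorm.coe_nnreal_ennreal
  have hg2 : (∫⁻ l, g l ^ (2:ℝ)) = S ^ (2:ℝ) := by
    rw [← hSf', eLpNorm_eq_lintegral_rpow_enorm_toReal (by norm_num) (by norm_num), ← ENNReal.rpow_mul]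
    norm_num
    rfl
  have hg2fin : (∫⁻ l, g l ^ (2:ℝ)) ≠ ⊤ := by
    rw [hg2]
    exact (ENNReal.rpow_lt_top_of_nonneg (by norm_num) hSne).ne
  set K : ℝ → ℝ → ℝ≥0∞ := fun x l => ENNReal.ofReal (Real.exp (-(ε*x)*|l|)) with hKdef
  set w : ℝ → ℝ≥0∞ := fun l => ENNReal.ofReal (|l| ^ ((1:ℝ)/2)) with hwdef
  have hKmeas : ∀ x, Measurable (K x) := fun x => by fun_prop
  have hwmeas : Measurable w := by fun_prop
  have h0 : ∀ᵐ l : ℝ ∂(volume : Measure ℝ), l ≠ 0 := by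
    refine ae_iff.mpr ?_
    simp only [not_not, setOf_eq_eq_singleton]
    exact measure_singleton 0
  -- pointwise norm bound
  have hptw : ∀ x : ℝ, 0 ≤ x → ∀ l : ℝ,
      ‖Complex.exp (γ l * x) * f' l‖ ≤ Real.exp (-(ε*x)*|l|) * ‖f' l‖ := by
    intro x hx l
    rw [norm_mul, Complex.norm_exp]
    have hre : (γ l * (x:ℂ)).re = (γ l).re * x := by
      simp [Complex.mul_re]
    refine mul_le_mul_of_nonneg_right ?_ (norm_nonneg _)
    refine Real.exp_le_exp.mpr ?_
    rw [hre]
    calc (γ l).re * x ≤ (-ε * |l|) * x :=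
          mul_le_mul_of_nonneg_right (hγre l) hx
      _ = -(ε*x)*|l| := by ring
  have hln : ∀ x : ℝ, 0 ≤ x →
      (∫⁻ l, (‖Complex.exp (γ l * x) * f' l‖₊ : ℝ≥0∞)) ≤ ∫⁻ l, K x l * g l := by
    intro x hx
    refine lintegral_mono fun l => ?_
    rw [← (ofReal_norm _).trans (enorm_eq_nnnorm _), hgdef, hKdef]
    simp only
    rw [← (ofReal_norm (f' l)).trans (enorm_eq_nnnorm _), ← ENNReal.ofReal_mul (Real.exp_nonneg _)]
    exact ENNReal.ofReal_le_ofReal (hptw x hx l)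
  -- properties of K, w
  have hKpos : ∀ x l, K x l ≠ 0 := fun x l => by
    simp [hKdef, ENNReal.ofReal_eq_zero, not_le, Real.exp_pos]
  have hKne : ∀ x l, K x l ≠ ⊤ := fun x l => ENNReal.ofReal_ne_top
  have hwne : ∀ l, w l ≠ ⊤ := fun l => ENNReal.ofReal_ne_top
  have hwpos : ∀ l : ℝ, l ≠ 0 → w l ≠ 0 := by
    intro l hl
    have : (0:ℝ) < |l| := abs_pos.mpr hl
    simp [hwdef, ENNReal.ofReal_eq_zero, not_le]
    positivity
  -- Cauchy-Schwarz with weight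
  have hCS : ∀ x : ℝ, (∫⁻ l, K x l * g l)
      ≤ (∫⁻ l, K x l * (w l)⁻¹) ^ ((1:ℝ)/2) * (∫⁻ l, K x l * w l * g l ^ (2:ℝ)) ^ ((1:ℝ)/2) := by
    intro x
    set A : ℝ → ℝ≥0∞ := fun l => (K x l) ^ ((1:ℝ)/2) * ((w l) ^ ((1:ℝ)/2))⁻¹ with hAdef
    set B : ℝ → ℝ≥0∞ := fun l => (K x l) ^ ((1:ℝ)/2) * (w l) ^ ((1:ℝ)/2) * g l with hBdef
    have hAm : Measurable A := by fun_prop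
    have hBm : Measurable B := by fun_prop
    have e1 : (∫⁻ l, K x l * g l) = ∫⁻ l, A l * B l := by
      refine lintegral_congr_ae (h0.mono fun l hl => ?_)
      have hw12 : (w l) ^ ((1:ℝ)/2) ≠ 0 := by
        simp [ENNReal.rpow_eq_zero_iff, hwpos l hl, hwne l]
      have hw12' : (w l) ^ ((1:ℝ)/2) ≠ ⊤ :=
        ENNReal.rpow_ne_top_of_nonneg (by norm_num) (hwne l)
      have hK12 : (K x l) ^ ((1:ℝ)/2) * (K x l) ^ ((1:ℝ)/2) = K x l := by
        rw [← ENNReal.rpow_add _ _ (hKpos x l) (hKne x l)]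
        norm_num
      calc K x l * g l = ((K x l) ^ ((1:ℝ)/2) * (K x l) ^ ((1:ℝ)/2))
            * (((w l) ^ ((1:ℝ)/2))⁻¹ * (w l) ^ ((1:ℝ)/2)) * g l := by
            rw [hK12, ENNReal.inv_mul_cancel hw12 hw12', mul_one]
        _ = A l * B l := by rw [hAdef, hBdef]; ring
    have e2 : ∀ l : ℝ, A l ^ (2:ℝ) = K x l * (w l)⁻¹ := by
      intro l
      rw [hAdef]
      simp only
      rw [ENNReal.mul_rpow_of_nonneg _ _ (by norm_num : (0:ℝ) ≤ 2),
        ← ENNReal.inv_rpow, sq_half, sq_half]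
    have e3 : ∀ l : ℝ, B l ^ (2:ℝ) = K x l * w l * g l ^ (2:ℝ) := by
      intro l
      rw [hBdef]
      simp only
      rw [ENNReal.mul_rpow_of_nonneg _ _ (by norm_num : (0:ℝ) ≤ 2),
        ENNReal.mul_rpow_of_nonneg _ _ (by norm_num : (0:ℝ) ≤ 2), sq_half, sq_half]
    calc (∫⁻ l, K x l * g l) = ∫⁻ l, A l * B l := e1
      _ ≤ (∫⁻ l, A l ^ (2:ℝ)) ^ ((1:ℝ)/2) * (∫⁻ l, B l ^ (2:ℝ)) ^ ((1:ℝ)/2) :=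
          cs2 hAm.aemeasurable hBm.aemeasurable
      _ = (∫⁻ l, K x l * (w l)⁻¹) ^ ((1:ℝ)/2) * (∫⁻ l, K x l * w l * g l ^ (2:ℝ)) ^ ((1:ℝ)/2) := by
          rw [lintegral_congr fun l => e2 l, lintegral_congr fun l => e3 l]
  -- value of the first factor
  have hA : ∀ x : ℝ, 0 < x →
      (∫⁻ l, K x l * (w l)⁻¹) = 2 * ENNReal.ofReal (Real.sqrt π * (ε*x) ^ (-(1/2):ℝ)) := by
    intro x hx
    have hb : 0 < ε * x := mul_pos hε hx
    have e : ∀ᵐ l : ℝ ∂(volume : Measure ℝ), K x l * (w l)⁻¹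
        = ENNReal.ofReal (|l| ^ (-(1/2):ℝ) * Real.exp (-((ε*x)*|l|))) := by
      refine h0.mono fun l hl => ?_
      have habs : (0:ℝ) < |l| := abs_pos.mpr hl
      have h5 : (0:ℝ) < |l| ^ ((1:ℝ)/2) := by positivity
      simp only [hKdef, hwdef]
      rw [← ENNReal.ofReal_inv_of_pos h5, ← ENNReal.ofReal_mul (Real.exp_nonneg _)]
      congr 1
      rw [show (-(1/2):ℝ) = -((1:ℝ)/2) by norm_num, Real.rpow_neg (abs_nonneg l)]
      rw [neg_mul]
      ring
    rw [lintegral_congr_ae e, lintA hb]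
  -- bound for the second factor
  have hH : ∀ x : ℝ, 0 < x →
      (∫⁻ l, K x l * w l * g l ^ (2:ℝ)) ≤ ENNReal.ofReal (1 + (ε*x)⁻¹) * ∫⁻ l, g l ^ (2:ℝ) := by
    intro x hx
    have hb : 0 < ε * x := mul_pos hε hx
    calc (∫⁻ l, K x l * w l * g l ^ (2:ℝ))
        ≤ ∫⁻ l, ENNReal.ofReal (1 + (ε*x)⁻¹) * g l ^ (2:ℝ) := by
          refine lintegral_mono fun l => ?_
          refine mul_le_mul_left ?_ _
          simp only [hKdef, hwdef]
          rw [← ENNReal.ofReal_mul (Real.exp_nonneg _)]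
          refine ENNReal.ofReal_le_ofReal ?_
          rw [neg_mul]
          exact te_bound hb (abs_nonneg l)
      _ = ENNReal.ofReal (1 + (ε*x)⁻¹) * ∫⁻ l, g l ^ (2:ℝ) := by
          rw [lintegral_const_mul _ (by fun_prop)]

  -- measurability helpers
  have hg2meas : Measurable fun l : ℝ => g l ^ (2:ℝ) := by
    simp only [hgdef]; fun_prop
  have hKWGjoint : Measurable fun p : ℝ × ℝ => K p.1 p.2 * w p.2 * g p.2 ^ (2:ℝ) := by
    simp only [hKdef, hwdef, hgdef]; fun_prop
  have hHmeas : Measurable fun x : ℝ => ∫⁻ l, K x l * w l * g l ^ (2:ℝ) :=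
    hKWGjoint.lintegral_prod_right'
  -- the parametric integral
  set F : ℝ → ℂ := fun x => ∫ l : ℝ, Complex.exp (γ l * x) * f' l with hFdef
  have hFsm : StronglyMeasurable F := by
    have hjm : StronglyMeasurable fun p : ℝ × ℝ => Complex.exp (γ p.2 * (p.1:ℂ)) * f' p.2 :=
      Measurable.stronglyMeasurable (by fun_prop)
    exact hjm.integral_prod_right'
  have hstep : ∀ x : ℝ, 0 < x →
      ENNReal.ofReal (‖F x‖^2)
        ≤ (2 * ENNReal.ofReal (Real.sqrt π * (ε*x) ^ (-(1/2):ℝ)))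
          * (∫⁻ l, K x l * w l * g l ^ (2:ℝ)) := by
    intro x hx
    have h1 : ENNReal.ofReal ‖F x‖ ≤ ∫⁻ l, K x l * g l := by
      calc ENNReal.ofReal ‖F x‖
          ≤ ENNReal.ofReal (∫⁻ l, ENNReal.ofReal ‖Complex.exp (γ l * x) * f' l‖).toReal :=
            ENNReal.ofReal_le_ofReal (norm_integral_le_lintegral_norm _)
        _ ≤ ∫⁻ l, ENNReal.ofReal ‖Complex.exp (γ l * x) * f' l‖ := ENNReal.ofReal_toReal_le
        _ = ∫⁻ l, (‖Complex.exp (γ l * x) * f' l‖₊ : ℝ≥0∞) := by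
            simp only [ofReal_norm, enorm_eq_nnnorm]
        _ ≤ ∫⁻ l, K x l * g l := hln x hx.le
    have h2 : ENNReal.ofReal (‖F x‖^2) = (ENNReal.ofReal ‖F x‖) ^ (2:ℝ) := by
      rw [ENNReal.ofReal_pow (norm_nonneg _), ← ENNReal.rpow_natCast]
      norm_num
    rw [h2]
    calc (ENNReal.ofReal ‖F x‖) ^ (2:ℝ) ≤ (∫⁻ l, K x l * g l) ^ (2:ℝ) :=
          ENNReal.rpow_le_rpow h1 (by norm_num)
      _ ≤ ((∫⁻ l, K x l * (w l)⁻¹) ^ ((1:ℝ)/2)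
            * (∫⁻ l, K x l * w l * g l ^ (2:ℝ)) ^ ((1:ℝ)/2)) ^ (2:ℝ) :=
          ENNReal.rpow_le_rpow (hCS x) (by norm_num)
      _ = (∫⁻ l, K x l * (w l)⁻¹) * (∫⁻ l, K x l * w l * g l ^ (2:ℝ)) := by
          rw [ENNReal.mul_rpow_of_nonneg _ _ (by norm_num : (0:ℝ) ≤ 2), sq_half, sq_half]
      _ = _ := by rw [hA x hx]
  set C1 : ℝ≥0∞ := ENNReal.ofReal (Real.sqrt π * ε ^ (-(1/2):ℝ)) with hC1def
  have hsplitC : ∀ x : ℝ, 0 < x →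
      (2 : ℝ≥0∞) * ENNReal.ofReal (Real.sqrt π * (ε*x) ^ (-(1/2):ℝ))
        = 2 * C1 * ENNReal.ofReal (x ^ (-(1/2):ℝ)) := by
    intro x hx
    rw [hC1def, mul_assoc, ← ENNReal.ofReal_mul (by positivity)]
    congr 2
    rw [Real.mul_rpow hε.le hx.le]
    ring
  have hmain : (∫⁻ x in Ioi (0:ℝ), ENNReal.ofReal (‖F x‖^2))
      ≤ ENNReal.ofReal (2*π/ε) * S ^ (2:ℝ) := by
    calc (∫⁻ x in Ioi (0:ℝ), ENNReal.ofReal (‖F x‖^2))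
        ≤ ∫⁻ x in Ioi (0:ℝ), 2 * C1
            * (ENNReal.ofReal (x ^ (-(1/2):ℝ)) * ∫⁻ l, K x l * w l * g l ^ (2:ℝ)) := by
          refine lintegral_mono_ae ((ae_restrict_iff' measurableSet_Ioi).mpr
            (Filter.Eventually.of_forall fun x hx => ?_))
          calc ENNReal.ofReal (‖F x‖^2)
              ≤ (2 * ENNReal.ofReal (Real.sqrt π * (ε*x) ^ (-(1/2):ℝ)))
                * (∫⁻ l, K x l * w l * g l ^ (2:ℝ)) := hstep x hx
            _ = _ := by rw [hsplitC x hx, mul_assoc]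
      _ = 2 * C1 * ∫⁻ x in Ioi (0:ℝ),
            ENNReal.ofReal (x ^ (-(1/2):ℝ)) * ∫⁻ l, K x l * w l * g l ^ (2:ℝ) :=
          lintegral_const_mul (2*C1) ((by fun_prop : Measurable fun x : ℝ =>
            ENNReal.ofReal (x ^ (-(1/2):ℝ))).mul hHmeas)
      _ = 2 * C1 * ∫⁻ x in Ioi (0:ℝ), ∫⁻ l,
            ENNReal.ofReal (x ^ (-(1/2):ℝ)) * (K x l * w l * g l ^ (2:ℝ)) := by
          congr 1
          refine lintegral_congr fun x => ?_
          exact (lintegral_const_mul _ (((hKmeas x).mul hwmeas).mul hg2meas)).symm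
      _ = 2 * C1 * ∫⁻ l, ∫⁻ x in Ioi (0:ℝ),
            ENNReal.ofReal (x ^ (-(1/2):ℝ)) * (K x l * w l * g l ^ (2:ℝ)) := by
          congr 1
          refine lintegral_lintegral_swap ?_
          have hm : Measurable (Function.uncurry fun (x l : ℝ) =>
              ENNReal.ofReal (x ^ (-(1/2):ℝ)) * (K x l * w l * g l ^ (2:ℝ))) := by
            have : Measurable fun p : ℝ × ℝ => ENNReal.ofReal (p.1 ^ (-(1/2):ℝ)) := by fun_prop
            exact this.mul hKWGjoint
          exact hm.aemeasurable
      _ = 2 * C1 * ∫⁻ l, C1 * g l ^ (2:ℝ) := by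
          congr 1
          refine lintegral_congr_ae (h0.mono fun l hl => ?_)
          have habs : (0:ℝ) < |l| := abs_pos.mpr hl
          have hd : 0 < ε * |l| := mul_pos hε habs
          calc ∫⁻ x in Ioi (0:ℝ), ENNReal.ofReal (x ^ (-(1/2):ℝ)) * (K x l * w l * g l ^ (2:ℝ))
              = ∫⁻ x in Ioi (0:ℝ),
                  (ENNReal.ofReal (x ^ (-(1/2):ℝ)) * K x l) * (w l * g l ^ (2:ℝ)) := by
                refine lintegral_congr fun x => by ring
            _ = (∫⁻ x in Ioi (0:ℝ), ENNReal.ofReal (x ^ (-(1/2):ℝ)) * K x l)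
                  * (w l * g l ^ (2:ℝ)) :=
                lintegral_mul_const _ ((by fun_prop : Measurable fun x : ℝ =>
                  ENNReal.ofReal (x ^ (-(1/2):ℝ))).mul (by simp only [hKdef]; fun_prop))
            _ = ENNReal.ofReal (Real.sqrt π * (ε*|l|) ^ (-(1/2):ℝ)) * (w l * g l ^ (2:ℝ)) := by
                congr 1
                rw [← lintB hd]
                refine setLIntegral_congr_fun measurableSet_Ioi
                  (fun x hx => ?_)
                have hx0 : (0:ℝ) < x := hx
                simp only [hKdef]
                rw [← ENNReal.ofReal_mul (by positivity)]
                congr 2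
                ring_nf
            _ = C1 * g l ^ (2:ℝ) := by
                simp only [hC1def, hwdef]
                rw [← mul_assoc, ← ENNReal.ofReal_mul (by positivity)]
                congr 2
                have e0 : |l| ^ (-(1/2):ℝ) * |l| ^ ((1:ℝ)/2) = 1 := by
                  rw [← Real.rpow_add habs]; norm_num
                calc Real.sqrt π * (ε*|l|) ^ (-(1/2):ℝ) * |l| ^ ((1:ℝ)/2)
                    = Real.sqrt π * ε ^ (-(1/2):ℝ) * (|l| ^ (-(1/2):ℝ) * |l| ^ ((1:ℝ)/2)) := by
                      rw [Real.mul_rpow hε.le (abs_nonneg l)]; ring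
                  _ = Real.sqrt π * ε ^ (-(1/2):ℝ) := by rw [e0, mul_one]
      _ = 2 * C1 * (C1 * ∫⁻ l, g l ^ (2:ℝ)) := by
          congr 1
          exact lintegral_const_mul _ hg2meas
      _ = ENNReal.ofReal (2*π/ε) * S ^ (2:ℝ) := by
          rw [hg2, ← mul_assoc]
          congr 1
          rw [hC1def, show ((2:ℝ≥0∞)) = ENNReal.ofReal (2:ℝ) by simp,
            ← ENNReal.ofReal_mul (by norm_num), ← ENNReal.ofReal_mul (by positivity)]
          congr 1
          have e1 : Real.sqrt π * Real.sqrt π = π := Real.mul_self_sqrt Real.pi_pos.le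
          have e2 : ε ^ (-(1/2):ℝ) * ε ^ (-(1/2):ℝ) = ε⁻¹ := by
            rw [← Real.rpow_add hε]
            norm_num [Real.rpow_neg_one]
          calc 2 * (Real.sqrt π * ε ^ (-(1/2):ℝ)) * (Real.sqrt π * ε ^ (-(1/2):ℝ))
              = 2 * (Real.sqrt π * Real.sqrt π) * (ε ^ (-(1/2):ℝ) * ε ^ (-(1/2):ℝ)) := by ring
            _ = 2 * π * ε⁻¹ := by rw [e1, e2]
            _ = 2 * π / ε := by rw [div_eq_mul_inv]
  -- integrability
  have hInt : ∀ x : ℝ, 0 < x → Integrable (fun l : ℝ => Complex.exp (γ l * x) * f l) := by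
    intro x hx
    have h1 : (∫⁻ l, K x l * (w l)⁻¹) ≠ ⊤ := by
      rw [hA x hx]
      exact ENNReal.mul_ne_top (by norm_num) ENNReal.ofReal_ne_top
    have h2 : (∫⁻ l, K x l * w l * g l ^ (2:ℝ)) ≠ ⊤ :=
      ne_top_of_le_ne_top (ENNReal.mul_ne_top ENNReal.ofReal_ne_top hg2fin) (hH x hx)
    have hfin : (∫⁻ l, (‖Complex.exp (γ l * x) * f' l‖₊ : ℝ≥0∞)) < ⊤ := by
      refine lt_of_le_of_lt ((hln x hx.le).trans (hCS x)) ?_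
      exact ENNReal.mul_lt_top
        (ENNReal.rpow_lt_top_of_nonneg (by norm_num) h1)
        (ENNReal.rpow_lt_top_of_nonneg (by norm_num) h2)
    have hi' : Integrable (fun l : ℝ => Complex.exp (γ l * x) * f' l) :=
      ⟨((Complex.measurable_exp.comp (hγ.mul_const _)).aestronglyMeasurable).mul
         hf'sm.aestronglyMeasurable, hfin⟩
    have hae : (fun l : ℝ => Complex.exp (γ l * x) * f' l) =ᵐ[volume]
        fun l : ℝ => Complex.exp (γ l * x) * f l :=
      hff'.symm.mono fun l hl =>
        show Complex.exp (γ l * ↑x) * f' l = Complex.exp (γ l * ↑x) * f l by rw [hl]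
    exact hi'.congr hae
  refine ⟨hInt, ?_⟩
  have hgoal_int : (∫ x in Ioi (0:ℝ), ‖∫ l : ℝ, Complex.exp (γ l * x) * f l‖^2)
      = ∫ x in Ioi (0:ℝ), ‖F x‖^2 := by
    refine integral_congr_ae (Filter.Eventually.of_forall fun x => ?_)
    have : (∫ l : ℝ, Complex.exp (γ l * x) * f l) = F x := by
      rw [hFdef]
      exact integral_congr_ae (hff'.mono fun l hl =>
        show Complex.exp (γ l * ↑x) * f l = Complex.exp (γ l * ↑x) * f' l by rw [hl])
    simp only [this]
  rw [hgoal_int]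
  have hnn : 0 ≤ᵐ[volume.restrict (Ioi (0:ℝ))] fun x => ‖F x‖^2 :=
    Filter.Eventually.of_forall fun x => sq_nonneg _
  have hsm2 : AEStronglyMeasurable (fun x => ‖F x‖^2) (volume.restrict (Ioi (0:ℝ))) :=
    (hFsm.measurable.norm.pow_const 2).aestronglyMeasurable
  rw [integral_eq_lintegral_of_nonneg_ae hnn hsm2]
  have hfinal : (∫⁻ x in Ioi (0:ℝ), ENNReal.ofReal (‖F x‖^2)).toReal
      ≤ (2*π/ε) * S.toReal^2 := by
    have h1 := ENNReal.toReal_mono (ENNReal.mul_ne_top ENNReal.ofReal_ne_top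
      ((ENNReal.rpow_lt_top_of_nonneg (by norm_num) hSne).ne)) hmain
    rw [ENNReal.toReal_mul, ENNReal.toReal_ofReal (by positivity),
      ← ENNReal.toReal_rpow] at h1
    calc (∫⁻ x in Ioi (0:ℝ), ENNReal.ofReal (‖F x‖^2)).toReal
        ≤ (2*π/ε) * S.toReal ^ (2:ℝ) := h1
      _ = (2*π/ε) * S.toReal^2 := by
          rw [show ((2:ℝ)) = ((2:ℕ):ℝ) by norm_num, Real.rpow_natCast]
  calc Real.sqrt (∫⁻ x in Ioi (0:ℝ), ENNReal.ofReal (‖F x‖^2)).toReal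
      ≤ Real.sqrt ((2*π/ε) * S.toReal^2) := Real.sqrt_le_sqrt hfinal
    _ = Real.sqrt (2*π/ε) * S.toReal := by
        rw [Real.sqrt_mul (by positivity), Real.sqrt_sq ENNReal.toReal_nonneg]
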